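/- Let A and B be unital complex C*-algebras, each simple as a ring, and let f be a C*-seminorm on the algebraic tensor product A ⊗_ℂ B such that f(a ⊗ 1) > 0 for every nonzero a ∈ A and f(1 ⊗ b) > 0 for every nonzero b ∈ B. Then f is a C*-norm, i.e. f(x) > 0 for every nonzero x ∈ A ⊗_ℂ B. -/

import Mathlib

set_option synthInstance.maxHeartbeats 1000000
set_option maxHeartbeats 1000000

open scoped TensorProduct

noncomputable section CStarNormDefs

namespace PaperCStarNorms

variable {A B : Type*} [Ring A] [Algebra ℂ A] [StarRing A] [StarModule ℂ A]
  [Ring B] [Algebra ℂ B] [StarRing B] [StarModule ℂ B]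

/-- The canonical involution on the algebraic tensor product `A ⊗[ℂ] B` of two complex
`*`-algebras, determined by `(a ⊗ b)* = a* ⊗ b*`. -/
def tensorStarAux : A ⊗[ℂ] B →+ A ⊗[ℂ] B :=
  TensorProduct.liftAddHom
    (AddMonoidHom.mk'
      (fun a => AddMonoidHom.mk' (fun b => star a ⊗ₜ[ℂ] star b)
        (fun b₁ b₂ => by simp [star_add, TensorProduct.tmul_add]))
      (fun a₁ a₂ => by
        ext b
        simp [star_add, TensorProduct.add_tmul]))
    (fun c a b => by
      simp [star_smul, TensorProduct.smul_tmul', TensorProduct.tmul_smul])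

@[simp] lemma tensorStarAux_tmul (a : A) (b : B) :
    tensorStarAux (a ⊗ₜ[ℂ] b) = star a ⊗ₜ[ℂ] star b :=
  TensorProduct.liftAddHom_tmul _ _ _ _

instance : StarRing (A ⊗[ℂ] B) where
  star := tensorStarAux
  star_involutive x := by
    show tensorStarAux (tensorStarAux x) = x
    induction x using TensorProduct.induction_on with
    | zero => simp
    | tmul a b => simp
    | add x y hx hy => simp only [map_add, hx, hy]
  star_mul x y := by
    show tensorStarAux (x * y) = tensorStarAux y * tensorStarAux x
    induction x using TensorProduct.induction_on with
    | zero => simp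
    | tmul a b =>
      induction y using TensorProduct.induction_on with
      | zero => simp
      | tmul c d => simp [Algebra.TensorProduct.tmul_mul_tmul]
      | add y₁ y₂ h₁ h₂ => rw [mul_add, map_add, h₁, h₂, map_add, add_mul]
    | add x₁ x₂ h₁ h₂ => rw [add_mul, map_add, h₁, h₂, map_add, mul_add]
  star_add x y := map_add tensorStarAux x y

@[simp] lemma star_tmul (a : A) (b : B) :
    star (a ⊗ₜ[ℂ] b) = star a ⊗ₜ[ℂ] star b := rfl

end PaperCStarNorms

/-- A C*-seminorm on a complex `*`-algebra `A`. -/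
def IsCstarSeminorm {A : Type*} [Ring A] [Algebra ℂ A] [StarRing A] (f : A → ℝ) : Prop :=
  (∀ x, 0 ≤ f x) ∧ (∀ x y, f (x + y) ≤ f x + f y) ∧
  (∀ (c : ℂ) (x), f (c • x) = ‖c‖ * f x) ∧ (∀ x y, f (x * y) ≤ f x * f y) ∧
  (∀ x, f (star x) = f x) ∧ (∀ x, f (star x * x) = f x ^ 2)

/-- A C*-norm on a complex `*`-algebra `A`. -/
def IsCstarNorm {A : Type*} [Ring A] [Algebra ℂ A] [StarRing A] (f : A → ℝ) : Prop :=
  IsCstarSeminorm f ∧ ∀ x, f x = 0 → x = 0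

end CStarNormDefs

/-- The algebraic tensor product `A ⊗[ℂ] B` of two complex algebras, written with the `ℂ`-module
structures coming from the algebra structures (this is the usual algebraic tensor product; being
explicit about the module structures merely assists instance resolution). -/
noncomputable abbrev AlgTensor (A B : Type*) [Ring A] [Algebra ℂ A] [Ring B] [Algebra ℂ B] :
    Type _ :=
  @TensorProduct ℂ _ A B _ _ Algebra.toModule Algebra.toModule




/-- In a simple complex Banach algebra, every central element is a scalar. -/
lemma central_scalar_of_simple {A : Type*} [NormedRing A] [NormedAlgebra ℂ A]
    [CompleteSpace A] [IsSimpleRing A] (a : A) (ha : ∀ u : A, u * a = a * u) :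
    ∃ c : ℂ, a = algebraMap ℂ A c := by
  obtain ⟨c, hc⟩ := spectrum.nonempty a
  refine ⟨c, ?_⟩
  rw [spectrum.mem_iff] at hc
  set z : A := algebraMap ℂ A c - a with hz
  have hzc : ∀ u : A, u * z = z * u := by
    intro u
    simp only [hz, mul_sub, sub_mul, ha u, Algebra.commutes]
  by_contra hne
  have hzne : z ≠ 0 := sub_ne_zero.mpr (Ne.symm hne)
  -- the two-sided ideal z * A
  let I : TwoSidedIdeal A := TwoSidedIdeal.mk' {x | ∃ y, x = z * y}
    ⟨0, (mul_zero z).symm⟩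
    (fun hx hy => by
      obtain ⟨y₁, rfl⟩ := hx; obtain ⟨y₂, rfl⟩ := hy
      exact ⟨y₁ + y₂, (mul_add z y₁ y₂).symm⟩)
    (fun hx => by obtain ⟨y, rfl⟩ := hx; exact ⟨-y, (mul_neg z y).symm⟩)
    (fun {u x} hx => by
      obtain ⟨y, rfl⟩ := hx
      exact ⟨u * y, by rw [← mul_assoc, hzc u, mul_assoc]⟩)
    (fun {x u} hx => by
      obtain ⟨y, rfl⟩ := hx
      exact ⟨y * u, mul_assoc z y u⟩)
  have hzI : z ∈ I := (TwoSidedIdeal.mem_mk' _ _ _ _ _ _ z).mpr ⟨1, (mul_one z).symm⟩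
  have h1 : (1 : A) ∈ I := IsSimpleRing.one_mem_of_ne_zero_mem I hzne hzI
  obtain ⟨y, hy⟩ := (TwoSidedIdeal.mem_mk' _ _ _ _ _ _ 1).mp h1
  exact hc ⟨⟨z, y, hy.symm, by rw [hzc y, ← hy]⟩, rfl⟩



/-- If `A` is simple and central over `ℂ`, then every nonzero "ideal-like" subset of
`A ⊗[ℂ] B` contains a nonzero element of the form `1 ⊗ b`. -/
lemma exists_one_tmul_mem {A B : Type*} [Ring A] [Algebra ℂ A] [Ring B] [Algebra ℂ B]
    [IsSimpleRing A]
    (hcentral : ∀ a : A, (∀ u : A, u * a = a * u) → ∃ c : ℂ, a = algebraMap ℂ A c)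
    (N : Set (A ⊗[ℂ] B))
    (hadd : ∀ {x y}, x ∈ N → y ∈ N → x + y ∈ N)
    (hsmul : ∀ (c : ℂ) {x}, x ∈ N → c • x ∈ N)
    (hmull : ∀ (z : A ⊗[ℂ] B) {x}, x ∈ N → z * x ∈ N)
    (hmulr : ∀ (z : A ⊗[ℂ] B) {x}, x ∈ N → x * z ∈ N)
    (x : A ⊗[ℂ] B) (hx : x ∈ N) (hxne : x ≠ 0) :
    ∃ b : B, b ≠ 0 ∧ (1 : A) ⊗ₜ[ℂ] b ∈ N := by
  classical
  have hneg : ∀ {y : A ⊗[ℂ] B}, y ∈ N → -y ∈ N := by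
    intro y hy
    simpa using hsmul (-1 : ℂ) hy
  let e := Module.Basis.ofVectorSpace ℂ B
  set ι := Module.Basis.ofVectorSpaceIndex ℂ B
  let ψ : A ⊗[ℂ] B ≃ₗ[ℂ] (ι →₀ A) :=
    (TensorProduct.congr (LinearEquiv.refl ℂ A) e.repr).trans
      (TensorProduct.finsuppScalarRight ℂ ℂ A ι)
  have hψ_tmul : ∀ (a : A) (b : B) (i : ι), ψ (a ⊗ₜ[ℂ] b) i = e.repr b i • a := by
    intro a b i
    simp [ψ, TensorProduct.finsuppScalarRight_apply_tmul_apply]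
  have hψ_left : ∀ (u : A) (y : A ⊗[ℂ] B) (i : ι),
      ψ ((u ⊗ₜ[ℂ] (1 : B)) * y) i = u * ψ y i := by
    intro u y i
    induction y using TensorProduct.induction_on with
    | zero => simp
    | tmul a b =>
      rw [Algebra.TensorProduct.tmul_mul_tmul, one_mul, hψ_tmul, hψ_tmul, mul_smul_comm]
    | add y₁ y₂ h₁ h₂ =>
      rw [mul_add, map_add, Finsupp.add_apply, h₁, h₂, map_add, Finsupp.add_apply, mul_add]
  have hψ_right : ∀ (u : A) (y : A ⊗[ℂ] B) (i : ι),
      ψ (y * (u ⊗ₜ[ℂ] (1 : B))) i = ψ y i * u := by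
    intro u y i
    induction y using TensorProduct.induction_on with
    | zero => simp
    | tmul a b =>
      rw [Algebra.TensorProduct.tmul_mul_tmul, mul_one, hψ_tmul, hψ_tmul, smul_mul_assoc]
    | add y₁ y₂ h₁ h₂ =>
      rw [add_mul, map_add, Finsupp.add_apply, h₁, h₂, map_add, Finsupp.add_apply, add_mul]
  -- minimal support cardinality among nonzero elements of N
  set S : Set ℕ := {n | ∃ y ∈ N, y ≠ 0 ∧ (ψ y).support.card = n} with hS
  have hSne : S.Nonempty := ⟨_, x, hx, hxne, rfl⟩
  obtain ⟨x₀, hx₀N, hx₀ne, hx₀card⟩ := Nat.sInf_mem hSne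
  set n₀ := sInf S
  set s := (ψ x₀).support with hs
  have hsne : s.Nonempty := by
    rw [hs, Finsupp.support_nonempty_iff]
    intro h
    exact hx₀ne (by simpa using ψ.injective (by simp [h]))
  obtain ⟨i₀, hi₀⟩ := hsne
  -- the two sided ideal of "i₀-coordinates of elements of N supported in s"
  let I : TwoSidedIdeal A := TwoSidedIdeal.mk'
    {a | ∃ y ∈ N, (ψ y).support ⊆ s ∧ ψ y i₀ = a}
    ⟨0, by simpa using hsmul 0 hx, by simp⟩
    (fun {a₁ a₂} h₁ h₂ => by
      obtain ⟨y₁, hy₁, hs₁, rfl⟩ := h₁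
      obtain ⟨y₂, hy₂, hs₂, rfl⟩ := h₂
      refine ⟨y₁ + y₂, hadd hy₁ hy₂, ?_, by simp⟩
      rw [map_add]
      exact Finsupp.support_add.trans (Finset.union_subset hs₁ hs₂))
    (fun {a} h => by
      obtain ⟨y, hy, hsy, rfl⟩ := h
      exact ⟨-y, hneg hy, by rw [map_neg]; simpa using hsy, by simp⟩)
    (fun {u a} h => by
      obtain ⟨y, hy, hsy, rfl⟩ := h
      refine ⟨(u ⊗ₜ[ℂ] (1 : B)) * y, hmull _ hy, ?_, hψ_left u y i₀⟩
      intro i hi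
      by_contra hns
      have : ψ y i = 0 := Finsupp.notMem_support_iff.mp (fun h' => hns (hsy h'))
      exact (Finsupp.mem_support_iff.mp hi) (by rw [hψ_left, this, mul_zero]))
    (fun {a u} h => by
      obtain ⟨y, hy, hsy, rfl⟩ := h
      refine ⟨y * (u ⊗ₜ[ℂ] (1 : B)), hmulr _ hy, ?_, hψ_right u y i₀⟩
      intro i hi
      by_contra hns
      have : ψ y i = 0 := Finsupp.notMem_support_iff.mp (fun h' => hns (hsy h'))
      exact (Finsupp.mem_support_iff.mp hi) (by rw [hψ_right, this, zero_mul]))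
  have ha₀ : ψ x₀ i₀ ∈ I := (TwoSidedIdeal.mem_mk' _ _ _ _ _ _ _).mpr
    ⟨x₀, hx₀N, subset_rfl, rfl⟩
  have ha₀ne : ψ x₀ i₀ ≠ 0 := Finsupp.mem_support_iff.mp hi₀
  have h1 : (1 : A) ∈ I := IsSimpleRing.one_mem_of_ne_zero_mem I ha₀ne ha₀
  obtain ⟨x', hx'N, hx's, hx'i₀⟩ := (TwoSidedIdeal.mem_mk' _ _ _ _ _ _ _).mp h1
  set g := ψ x' with hg
  have hgi₀ : g i₀ = 1 := hx'i₀
  have hx'ne : x' ≠ 0 := by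
    intro h
    have hg0 : g = 0 := by rw [hg, h, map_zero]
    rw [hg0] at hgi₀
    simp at hgi₀
  have hsupp : g.support = s := by
    refine Finset.eq_of_subset_of_card_le hx's ?_
    rw [hx₀card]
    exact Nat.sInf_le (show (ψ x').support.card ∈ S from ⟨x', hx'N, hx'ne, rfl⟩)
  -- commutators vanish by minimality
  have hcomm : ∀ (u : A) (i : ι), u * g i = g i * u := by
    intro u i
    set y : A ⊗[ℂ] B := (u ⊗ₜ[ℂ] (1 : B)) * x' + -(x' * (u ⊗ₜ[ℂ] (1 : B))) with hy
    have hyN : y ∈ N := hadd (hmull _ hx'N) (hneg (hmulr _ hx'N))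
    have hψy : ∀ j, ψ y j = u * g j - g j * u := by
      intro j
      rw [hy, map_add, map_neg, Finsupp.add_apply, Finsupp.neg_apply, hψ_left, hψ_right,
        sub_eq_add_neg]
    have hysupp : (ψ y).support ⊆ s.erase i₀ := by
      intro j hj
      rw [Finsupp.mem_support_iff, hψy] at hj
      rw [Finset.mem_erase]
      constructor
      · intro h
        exact hj (by rw [h, hgi₀, mul_one, one_mul, sub_self])
      · rw [← hsupp, Finsupp.mem_support_iff]
        intro h
        exact hj (by rw [h, mul_zero, zero_mul, sub_self])
    have hy0 : y = 0 := by
      by_contra hyne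
      have hcard : (ψ y).support.card < n₀ := by
        calc (ψ y).support.card ≤ (s.erase i₀).card := Finset.card_le_card hysupp
        _ < s.card := Finset.card_erase_lt_of_mem hi₀
        _ = n₀ := hx₀card
      exact absurd (Nat.sInf_le (show (ψ y).support.card ∈ S from ⟨y, hyN, hyne, rfl⟩)) (Nat.not_le.mpr hcard)
    have := hψy i
    rw [hy0, map_zero, Finsupp.coe_zero, Pi.zero_apply] at this
    exact sub_eq_zero.mp this.symm
  -- each coordinate is a scalar
  have hc : ∀ i : ι, ∃ c : ℂ, g i = algebraMap ℂ A c := fun i =>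
    hcentral (g i) (fun u => hcomm u i)
  choose c hcspec using hc
  set b : B := ∑ i ∈ s, c i • e i with hb
  have hx'eq : x' = (1 : A) ⊗ₜ[ℂ] b := by
    apply ψ.injective
    ext j
    have : ((1 : A) ⊗ₜ[ℂ] b) = ∑ i ∈ s, c i • ((1 : A) ⊗ₜ[ℂ] (e i : B)) := by
      rw [hb, TensorProduct.tmul_sum]
      exact Finset.sum_congr rfl (fun i _ => TensorProduct.tmul_smul _ _ _)
    rw [this, map_sum, Finsupp.finset_sum_apply]
    have hterm : ∀ i ∈ s, (ψ (c i • ((1 : A) ⊗ₜ[ℂ] (e i : B)))) j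
        = if i = j then c i • (1 : A) else 0 := by
      intro i _
      rw [map_smul, Finsupp.smul_apply, hψ_tmul, Module.Basis.repr_self]
      by_cases h : i = j
      · simp [h]
      · simp [h, Finsupp.single_eq_of_ne h]
    rw [Finset.sum_congr rfl hterm, Finset.sum_ite_eq' s j (fun i => c i • (1 : A)), ← hg]
    by_cases hj : j ∈ s
    · rw [if_pos hj, hcspec j, Algebra.algebraMap_eq_smul_one]
    · rw [if_neg hj]
      have : j ∉ g.support := by rw [hsupp]; exact hj
      exact Finsupp.notMem_support_iff.mp this
  refine ⟨b, ?_, hx'eq ▸ hx'N⟩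
  intro hb0
  exact hx'ne (by rw [hx'eq, hb0, TensorProduct.tmul_zero])

/-- **Statement 9.** Let `A` and `B` be unital complex C*-algebras which are simple as rings,
and let `f` be a C*-seminorm on the algebraic tensor product `A ⊗[ℂ] B` which is nonzero on
nonzero elements of the form `a ⊗ 1` and `1 ⊗ b`. Then `f` is a C*-norm. -/
theorem cstarSeminorm_is_norm_of_simple_factors
    (A B : Type*) [CStarAlgebra A] [CStarAlgebra B] [StarModule ℂ A] [StarModule ℂ B]
    (hA : IsSimpleRing A) (hB : IsSimpleRing B)
    (f : AlgTensor A B → ℝ) (hf : IsCstarSeminorm f)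
    (hfA : ∀ a : A, a ≠ 0 → 0 < f (a ⊗ₜ[ℂ] (1 : B)))
    (hfB : ∀ b : B, b ≠ 0 → 0 < f ((1 : A) ⊗ₜ[ℂ] b)) :
    ∀ x : AlgTensor A B, x ≠ 0 → 0 < f x := by
  haveI := hA
  haveI := hB
  obtain ⟨hpos, haddf, hsmulf, hmulf, hstarf, hcf⟩ := hf
  intro x hxne
  rcases (hpos x).lt_or_eq with h | h
  · exact h
  exfalso
  set N : Set (AlgTensor A B) := {y | f y = 0} with hN
  have hNadd : ∀ {y z : AlgTensor A B}, y ∈ N → z ∈ N → y + z ∈ N := by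
    intro y z hy hz
    have : f (y + z) ≤ 0 := by
      calc f (y + z) ≤ f y + f z := haddf y z
      _ = 0 := by rw [hy, hz, add_zero]
    exact le_antisymm this (hpos _)
  have hNsmul : ∀ (c : ℂ) {y : AlgTensor A B}, y ∈ N → c • y ∈ N := by
    intro c y hy
    show f (c • y) = 0
    rw [hsmulf c y, hy, mul_zero]
  have hNmull : ∀ (z : AlgTensor A B) {y : AlgTensor A B}, y ∈ N → z * y ∈ N := by
    intro z y hy
    have : f (z * y) ≤ 0 := by
      calc f (z * y) ≤ f z * f y := hmulf z y
      _ = 0 := by rw [hy, mul_zero]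
    exact le_antisymm this (hpos _)
  have hNmulr : ∀ (z : AlgTensor A B) {y : AlgTensor A B}, y ∈ N → y * z ∈ N := by
    intro z y hy
    have : f (y * z) ≤ 0 := by
      calc f (y * z) ≤ f y * f z := hmulf y z
      _ = 0 := by rw [hy, zero_mul]
    exact le_antisymm this (hpos _)
  have hcentral : ∀ a : A, (∀ u : A, u * a = a * u) → ∃ c : ℂ, a = algebraMap ℂ A c :=
    fun a ha => central_scalar_of_simple a ha
  obtain ⟨b, hbne, hbN⟩ :=
    exists_one_tmul_mem hcentral N hNadd hNsmul hNmull hNmulr x h.symm hxne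
  exact (ne_of_gt (hfB b hbne)) hbN
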